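/- Let $f_0$ be continuous and non-monotone on $[0,1]$ with a dip of size $2\epsilon > 0$ on an interval of positive $Q$-measure, where $Q$ is a probability measure with full support on $(0,1)$. Then there exists $\psi > 0$ such that $\sup_{f_1 \text{ non-decreasing}} \int_0^1 \exp\{-\psi (f_0(x) - f_1(x))^2\}\, Q(dx) < 1$. -/

import Mathlib

open MeasureTheory Set

set_option maxHeartbeats 1600000

/-- If `f₀` is continuous with a dip of size `2ε` and `Q` has full support on `(0,1)`, then
for some `ψ > 0` the integral `∫ exp{-ψ(f₀-f₁)²} dQ` is bounded away from `1`, uniformly over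
all non-decreasing `f₁`. -/
theorem stmt_12 (f₀ : ℝ → ℝ) (hf₀ : ContinuousOn f₀ (Icc 0 1))
    (ε : ℝ) (hε : 0 < ε)
    (s₁ s₂ : ℝ) (hs₁ : s₁ ∈ Icc (0 : ℝ) 1) (hs₂ : s₂ ∈ Icc (0 : ℝ) 1)
    (hlt : s₁ < s₂) (hdip : 2 * ε ≤ f₀ s₁ - f₀ s₂)
    (Q : Measure ℝ) [IsProbabilityMeasure Q]
    (hQsupp : Q (Ioo (0 : ℝ) 1) = 1)
    (hQfull : ∀ a b : ℝ, 0 ≤ a → a < b → b ≤ 1 → 0 < Q (Ioo a b)) :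
    ∃ ψ > (0 : ℝ), ∃ c < (1 : ℝ), ∀ f₁ : ℝ → ℝ, MonotoneOn f₁ (Icc 0 1) →
      ∫ x, Real.exp (-ψ * (f₀ x - f₁ x) ^ 2) ∂Q ≤ c := by
  -- continuity moduli at s₁ and s₂
  obtain ⟨δ₁, hδ₁pos, hδ₁⟩ := Metric.continuousOn_iff.mp hf₀ s₁ hs₁ (ε/2) (by positivity)
  obtain ⟨δ₂, hδ₂pos, hδ₂⟩ := Metric.continuousOn_iff.mp hf₀ s₂ hs₂ (ε/2) (by positivity)
  set η : ℝ := min (min δ₁ δ₂) ((s₂ - s₁)/2) with hηdef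
  have hηpos : 0 < η := lt_min (lt_min hδ₁pos hδ₂pos) (by linarith)
  have hηδ₁ : η ≤ δ₁ := le_trans (min_le_left _ _) (min_le_left _ _)
  have hηδ₂ : η ≤ δ₂ := le_trans (min_le_left _ _) (min_le_right _ _)
  have hηs : η ≤ (s₂ - s₁)/2 := min_le_right _ _
  set a₁ : ℝ := max 0 (s₁ - η) with ha₁def
  set b₁ : ℝ := s₁ + η with hb₁def
  set a₂ : ℝ := s₂ - η with ha₂def
  set b₂ : ℝ := min 1 (s₂ + η) with hb₂def
  have ha₁0 : (0:ℝ) ≤ a₁ := le_max_left _ _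
  have ha₁s : s₁ - η ≤ a₁ := le_max_right _ _
  have ha₁s' : a₁ ≤ s₁ := max_le hs₁.1 (by linarith)
  have ha₁b₁ : a₁ < b₁ := lt_of_le_of_lt ha₁s' (by simp [hb₁def]; linarith)
  have hb₁a₂ : b₁ ≤ a₂ := by simp only [hb₁def, ha₂def]; linarith
  have ha₂0 : (0:ℝ) < a₂ := by have := hs₁.1; simp only [ha₂def]; linarith
  have hb₂1 : b₂ ≤ 1 := min_le_left _ _
  have ha₂b₂ : a₂ < b₂ := lt_min (by linarith [hs₂.2]) (by linarith)
  have hb₁1 : b₁ ≤ 1 := le_trans hb₁a₂ (le_trans ha₂b₂.le hb₂1)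
  -- interval facts
  have hI₁sub : Ioo a₁ b₁ ⊆ Ioo (0:ℝ) 1 := fun x hx =>
    ⟨lt_of_le_of_lt ha₁0 hx.1, lt_of_lt_of_le hx.2 (le_trans hb₁a₂ (le_trans ha₂b₂.le hb₂1))⟩
  have hI₂sub : Ioo a₂ b₂ ⊆ Ioo (0:ℝ) 1 := fun x hx =>
    ⟨lt_of_le_of_lt ha₂0.le hx.1, lt_of_lt_of_le hx.2 hb₂1⟩
  have hI₁f : ∀ x ∈ Ioo a₁ b₁, f₀ s₁ - ε/2 < f₀ x := by
    intro x hx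
    have hx01 : x ∈ Icc (0:ℝ) 1 := ⟨le_of_lt (lt_of_le_of_lt ha₁0 hx.1), (hI₁sub hx).2.le⟩
    have hdist : dist x s₁ < δ₁ := by
      rw [Real.dist_eq, abs_sub_lt_iff]
      constructor
      · have := hx.2; simp only [hb₁def] at this; linarith
      · have := lt_of_le_of_lt ha₁s hx.1; linarith
    have := hδ₁ x hx01 hdist
    rw [Real.dist_eq, abs_sub_lt_iff] at this
    linarith [this.2]
  have hI₂f : ∀ x ∈ Ioo a₂ b₂, f₀ x < f₀ s₂ + ε/2 := by
    intro x hx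
    have hx01 : x ∈ Icc (0:ℝ) 1 := ⟨le_of_lt (lt_of_le_of_lt ha₂0.le hx.1), (hI₂sub hx).2.le⟩
    have hdist : dist x s₂ < δ₂ := by
      rw [Real.dist_eq, abs_sub_lt_iff]
      constructor
      · have := lt_of_lt_of_le hx.2 (min_le_right 1 (s₂ + η)); linarith
      · have := hx.1; simp only [ha₂def] at this; linarith
    have := hδ₂ x hx01 hdist
    rw [Real.dist_eq, abs_sub_lt_iff] at this
    linarith [this.1]
  have hb₁mem : b₁ ∈ Icc (0:ℝ) 1 := ⟨le_trans ha₁0 ha₁b₁.le, hb₁1⟩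
  -- key dichotomy
  have key : ∀ f₁ : ℝ → ℝ, MonotoneOn f₁ (Icc 0 1) →
      ∃ S, (S = Ioo a₁ b₁ ∨ S = Ioo a₂ b₂) ∧
        ∀ x ∈ S, (ε/2)^2 ≤ (f₀ x - f₁ x)^2 := by
    intro f₁ hf₁
    by_cases hc : f₀ s₁ - ε ≤ f₁ b₁
    · refine ⟨Ioo a₂ b₂, Or.inr rfl, fun x hx => ?_⟩
      have hx01 : x ∈ Icc (0:ℝ) 1 := ⟨(hI₂sub hx).1.le, (hI₂sub hx).2.le⟩
      have h1 : f₁ b₁ ≤ f₁ x := hf₁ hb₁mem hx01 (le_trans hb₁a₂ hx.1.le)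
      have h2 : f₀ x < f₀ s₂ + ε/2 := hI₂f x hx
      nlinarith
    · push_neg at hc
      refine ⟨Ioo a₁ b₁, Or.inl rfl, fun x hx => ?_⟩
      have hx01 : x ∈ Icc (0:ℝ) 1 := ⟨(hI₁sub hx).1.le, (hI₁sub hx).2.le⟩
      have h1 : f₁ x ≤ f₁ b₁ := hf₁ hx01 hb₁mem hx.2.le
      have h2 : f₀ s₁ - ε/2 < f₀ x := hI₁f x hx
      nlinarith
  -- measure lower bound
  set q : ℝ := min (Q (Ioo a₁ b₁)).toReal (Q (Ioo a₂ b₂)).toReal with hqdef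
  have hq : 0 < q := by
    refine lt_min ?_ ?_ <;>
      exact ENNReal.toReal_pos (hQfull _ _ (by linarith) (by linarith) (by linarith)).ne'
        (measure_ne_top Q _)
  set r : ℝ := Real.exp (-(ε/2)^2) with hrdef
  have hr0 : 0 < r := Real.exp_pos _
  have hr1 : r < 1 := by
    have h0 : -(ε/2)^2 < 0 := by nlinarith
    calc r = Real.exp (-(ε/2)^2) := rfl
      _ < Real.exp 0 := Real.exp_lt_exp.mpr h0
      _ = 1 := Real.exp_zero
  refine ⟨1, one_pos, 1 - (1-r)*q, by nlinarith [mul_pos (show (0:ℝ) < 1 - r by linarith) hq], ?_⟩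
  intro f₁ hf₁
  obtain ⟨S, hSor, hSbd⟩ := key f₁ hf₁
  have hSmeas : MeasurableSet S := by rcases hSor with h | h <;> rw [h] <;> exact measurableSet_Ioo
  have hSsub : S ⊆ Ioo (0:ℝ) 1 := by rcases hSor with h | h <;> rw [h] <;> assumption
  have hQS : q ≤ (Q S).toReal := by
    rcases hSor with h | h <;> rw [h]
    · exact min_le_left _ _
    · exact min_le_right _ _
  have hQS1 : (Q S).toReal ≤ 1 := by
    rw [← ENNReal.toReal_one]
    exact ENNReal.toReal_mono ENNReal.one_ne_top prob_le_one
  -- measurable surrogate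
  set clamp : ℝ → ℝ := fun x => min 1 (max 0 x) with hclampdef
  have hclamp_mem : ∀ x, clamp x ∈ Icc (0:ℝ) 1 :=
    fun x => ⟨le_min one_pos.le (le_max_left _ _), min_le_left _ _⟩
  have hclamp_mono : Monotone clamp :=
    fun x y hxy => min_le_min le_rfl (max_le_max le_rfl hxy)
  have hclamp_cont : Continuous clamp :=
    continuous_const.min (continuous_const.max continuous_id)
  have hclamp_id : ∀ x ∈ Ioo (0:ℝ) 1, clamp x = x := by
    intro x hx
    simp only [hclampdef]
    rw [max_eq_right hx.1.le, min_eq_right hx.2.le]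
  set F₀ : ℝ → ℝ := fun x => f₀ (clamp x) with hF₀def
  set F₁ : ℝ → ℝ := fun x => f₁ (clamp x) with hF₁def
  have hF₀c : Continuous F₀ := hf₀.comp_continuous hclamp_cont hclamp_mem
  have hF₁mono : Monotone F₁ :=
    fun x y hxy => hf₁ (hclamp_mem x) (hclamp_mem y) (hclamp_mono hxy)
  have hF₁m : Measurable F₁ := hF₁mono.measurable
  set g : ℝ → ℝ := fun x => Real.exp (-1 * (F₀ x - F₁ x)^2) with hgdef
  have hgmeas : Measurable g :=
    Real.measurable_exp.comp ((measurable_const.mul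
      ((hF₀c.measurable.sub hF₁m).pow_const 2)))
  have hgle1 : ∀ x, g x ≤ 1 := by
    intro x
    have h0 : -1 * (F₀ x - F₁ x)^2 ≤ 0 := by nlinarith [sq_nonneg (F₀ x - F₁ x)]
    calc g x = Real.exp (-1 * (F₀ x - F₁ x)^2) := rfl
      _ ≤ Real.exp 0 := Real.exp_le_exp.mpr h0
      _ = 1 := Real.exp_zero
  have hint : Integrable g Q := by
    refine Integrable.mono' (integrable_const 1) hgmeas.aestronglyMeasurable ?_
    filter_upwards with x
    rw [Real.norm_eq_abs, abs_of_pos (Real.exp_pos _)]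
    exact hgle1 x
  -- a.e. identification
  have hcompl : Q (Ioo (0:ℝ) 1)ᶜ = 0 :=
    (prob_compl_eq_zero_iff measurableSet_Ioo).mpr hQsupp
  have hae : ∀ᵐ x ∂Q, x ∈ Ioo (0:ℝ) 1 := by
    have heq : {x : ℝ | ¬ x ∈ Ioo (0:ℝ) 1} = (Ioo (0:ℝ) 1)ᶜ := rfl
    rw [ae_iff, heq]
    exact hcompl
  have hcongr : ∫ x, Real.exp (-1 * (f₀ x - f₁ x) ^ 2) ∂Q = ∫ x, g x ∂Q := by
    refine integral_congr_ae (hae.mono fun x hx => ?_)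
    simp only [hgdef, hF₀def, hF₁def, hclamp_id x hx]
  rw [hcongr]
  -- split integral
  have hsplit : ∫ x, g x ∂Q = (∫ x in S, g x ∂Q) + ∫ x in Sᶜ, g x ∂Q :=
    (integral_add_compl hSmeas hint).symm
  have hbd1 : ∫ x in S, g x ∂Q ≤ (Q S).toReal * r := by
    have hle : ∀ x ∈ S, g x ≤ r := by
      intro x hx
      have hx01 := hSsub hx
      have hb := hSbd x hx
      rw [hgdef, hrdef]
      simp only [hF₀def, hF₁def, hclamp_id x hx01]
      exact Real.exp_le_exp.mpr (by nlinarith)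
    calc ∫ x in S, g x ∂Q ≤ ∫ _x in S, r ∂Q :=
          setIntegral_mono_on hint.integrableOn (integrableOn_const
            (measure_lt_top Q S).ne) hSmeas hle
      _ = (Q S).toReal * r := by rw [setIntegral_const, smul_eq_mul, measureReal_def]
  have hbd2 : ∫ x in Sᶜ, g x ∂Q ≤ (Q Sᶜ).toReal := by
    calc ∫ x in Sᶜ, g x ∂Q ≤ ∫ _x in Sᶜ, (1:ℝ) ∂Q :=
          setIntegral_mono_on hint.integrableOn (integrableOn_const
            (measure_lt_top Q Sᶜ).ne) hSmeas.compl (fun x _ => hgle1 x)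
      _ = (Q Sᶜ).toReal := by rw [setIntegral_const, smul_eq_mul, mul_one, measureReal_def]
  have hcomplS : (Q Sᶜ).toReal = 1 - (Q S).toReal := by
    rw [prob_compl_eq_one_sub hSmeas, ENNReal.toReal_sub_of_le prob_le_one ENNReal.one_ne_top,
      ENNReal.toReal_one]
  rw [hsplit]
  have := hbd1
  have := hbd2
  nlinarith [hQS, hQS1, hr1.le, hq.le]
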